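/- arXiv:2209.04904 — 2 statements merged into one kernel-verified Lean document; each statement's English description precedes it below -/
import Mathlib

section
/- Let μ denote the surface measure on the unit sphere 𝕊² ⊂ ℝ³ and let k be a symmetric 3×3 real matrix. For all indices s, l ∈ {1, 2, 3}, ∫_{𝕊²} ⟨kx, x⟩² x^s xˡ dμ(x) = (4π/105) · ( ((tr k)² + 2‖k‖²) δ_{sl} + 4 (tr k) k_{sl} + 8 (k²)_{sl} ), where ‖k‖² = Σ_{i,j} k_{ij}² is the squared Frobenius norm and (k²)_{sl} = Σ_t k_{st} k_{tl}. -/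
open MeasureTheory Real

/-- The surface measure on the unit sphere `𝕊² ⊂ ℝ³`, viewed as a measure on the
ambient space `ℝ³` supported on the sphere (induced from Lebesgue measure). -/
noncomputable def sphereMeasure2 : Measure (EuclideanSpace ℝ (Fin 3)) :=
  Measure.map Subtype.val ((volume : Measure (EuclideanSpace ℝ (Fin 3))).toSphere)

/-- The quadratic form `⟨kx, x⟩ = Σ_{i,j} k_{ij} xⁱ xʲ` of a matrix. -/
def quadForm (k : Matrix (Fin 3) (Fin 3) ℝ) (x : EuclideanSpace ℝ (Fin 3)) : ℝ :=
  ∑ i, ∑ j, k i j * x i * x j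

namespace SphereMoment

open Filter Set Metric

local notation "E3" => EuclideanSpace ℝ (Fin 3)

noncomputable def G (n : ℕ) : ℝ := ∫ x : ℝ, x ^ n * Real.exp (-x ^ 2)

lemma integrable_pow_exp (n : ℕ) : Integrable (fun x : ℝ => x ^ n * Real.exp (-x ^ 2)) := by
  have h : Integrable (fun x : ℝ => ((Nat.factorial n : ℝ) * Real.exp (1/2)) * Real.exp (-(1/2) * x ^ 2)) :=
    (integrable_exp_neg_mul_sq (by norm_num : (0:ℝ) < 1/2)).const_mul _
  apply h.mono' ?_ ?_
  · exact ((continuous_pow n).mul (by continuity)).aestronglyMeasurable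
  · filter_upwards with x
    rw [norm_mul, norm_pow, Real.norm_eq_abs, Real.norm_eq_abs, Real.abs_exp]
    have h1 : |x| ^ n ≤ (Nat.factorial n : ℝ) * Real.exp |x| := by
      have := Real.pow_div_factorial_le_exp (x := |x|) (abs_nonneg x) n
      rw [div_le_iff₀ (by positivity)] at this
      linarith [this]
    calc |x| ^ n * Real.exp (-x ^ 2) ≤ ((Nat.factorial n : ℝ) * Real.exp |x|) * Real.exp (-x ^ 2) := by
          apply mul_le_mul_of_nonneg_right h1 (Real.exp_pos _).le
      _ = (Nat.factorial n : ℝ) * Real.exp (|x| + -x ^ 2) := by rw [Real.exp_add]; ring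
      _ ≤ (Nat.factorial n : ℝ) * Real.exp (1/2 + -(1/2) * x ^ 2) := by
          have : |x| + -x ^ 2 ≤ 1/2 + -(1/2) * x ^ 2 := by nlinarith [sq_abs x, sq_nonneg (|x| - 1)]
          exact mul_le_mul_of_nonneg_left (Real.exp_le_exp.2 this) (by positivity)
      _ = ((Nat.factorial n : ℝ) * Real.exp (1/2)) * Real.exp (-(1/2) * x ^ 2) := by rw [Real.exp_add]; ring

lemma G_odd {n : ℕ} (hn : Odd n) : G n = 0 := by
  have h : ∫ x : ℝ, (-x) ^ n * Real.exp (-(-x) ^ 2) = ∫ x : ℝ, x ^ n * Real.exp (-x ^ 2) :=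
    integral_neg_eq_self (fun x => x ^ n * Real.exp (-x ^ 2)) _
  simp only [hn.neg_pow, neg_sq, neg_mul] at h
  rw [integral_neg] at h
  rw [G]
  linarith

lemma tendsto_pow_exp_atTop (m : ℕ) :
    Tendsto (fun x : ℝ => x ^ m * Real.exp (-x ^ 2)) atTop (nhds 0) := by
  have hub : Tendsto (fun x : ℝ => (x ^ 2) ^ m * Real.exp (-x ^ 2)) atTop (nhds 0) := by
    have := (tendsto_pow_mul_exp_neg_atTop_nhds_zero m).comp
      (tendsto_pow_atTop (n := 2) (by norm_num) : Tendsto (fun x : ℝ => x ^ 2) atTop atTop)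
    simpa [Function.comp_def] using this
  apply squeeze_zero' (Eventually.filter_mono (le_refl _) ?_) ?_ hub
  · filter_upwards [eventually_ge_atTop (0:ℝ)] with x hx
    positivity
  · filter_upwards [eventually_ge_atTop (1:ℝ)] with x hx
    have : x ^ m ≤ (x ^ 2) ^ m := by
      apply pow_le_pow_left₀ (by linarith) (by nlinarith)
    exact mul_le_mul_of_nonneg_right this (Real.exp_pos _).le

lemma tendsto_pow_exp_atBot (m : ℕ) :
    Tendsto (fun x : ℝ => x ^ m * Real.exp (-x ^ 2)) atBot (nhds 0) := by
  have h := ((tendsto_pow_exp_atTop m).comp tendsto_neg_atBot_atTop).const_mul ((-1:ℝ) ^ m)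
  rw [mul_zero] at h
  apply h.congr
  intro x
  show (-1:ℝ) ^ m * ((-x) ^ m * Real.exp (-(-x) ^ 2)) = _
  rw [neg_sq, ← mul_assoc, ← mul_pow]
  norm_num

lemma G_succ_succ (n : ℕ) : G (n + 2) = (n + 1) / 2 * G n := by
  have key : ∫ x : ℝ, ((n+1 : ℝ) * (x ^ n * Real.exp (-x ^ 2)) - 2 * (x ^ (n+2) * Real.exp (-x ^ 2))) = 0 - 0 := by
    apply MeasureTheory.integral_of_hasDerivAt_of_tendsto
      (f := fun x : ℝ => x ^ (n+1) * Real.exp (-x ^ 2))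
    · intro x
      have h1 : HasDerivAt (fun x : ℝ => x ^ (n+1)) ((n+1 : ℝ) * x ^ n) x := by
        simpa using hasDerivAt_pow (n+1) x
      have h2 : HasDerivAt (fun x : ℝ => Real.exp (-x ^ 2)) (Real.exp (-x ^ 2) * (-(2*x))) x := by
        have : HasDerivAt (fun x : ℝ => -x ^ 2) (-(2*x)) x := by
          simpa using (hasDerivAt_pow 2 x).fun_neg
        exact (Real.hasDerivAt_exp _).comp x this
      have := h1.fun_mul h2
      refine this.congr_deriv ?_
      ring
    · exact ((integrable_pow_exp n).const_mul _).sub ((integrable_pow_exp (n+2)).const_mul 2)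
    · exact tendsto_pow_exp_atBot (n+1)
    · exact tendsto_pow_exp_atTop (n+1)
  rw [integral_sub ((integrable_pow_exp n).const_mul _) ((integrable_pow_exp (n+2)).const_mul 2),
    integral_const_mul, integral_const_mul] at key
  have h2 : ((n:ℝ)+1) * G n - 2 * G (n+2) = 0 := by simpa [G] using key
  linarith

lemma G_zero : G 0 = Real.sqrt π := by
  have := integral_gaussian 1
  simp only [neg_mul, one_mul, div_one] at this
  simpa [G] using this

lemma G_two : G 2 = Real.sqrt π / 2 := by
  have := G_succ_succ 0
  rw [G_zero] at this
  norm_num at this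
  linarith

lemma G_four : G 4 = 3 / 4 * Real.sqrt π := by
  have := G_succ_succ 2
  rw [G_two] at this
  norm_num at this
  linarith

lemma G_six : G 6 = 15 / 8 * Real.sqrt π := by
  have := G_succ_succ 4
  rw [G_four] at this
  norm_num at this
  linarith

lemma G_eight : G 8 = 105 / 16 * Real.sqrt π := by
  have := G_succ_succ 6
  rw [G_six] at this
  norm_num at this
  linarith

lemma radial_integral : ∫ r in Set.Ioi (0:ℝ), r ^ 8 * Real.exp (-r ^ 2) = 105 / 32 * Real.sqrt π := by
  have hint := integrable_pow_exp 8
  have hsplit : (∫ r in Set.Iic (0:ℝ), r ^ 8 * Real.exp (-r ^ 2)) +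
      (∫ r in Set.Ioi (0:ℝ), r ^ 8 * Real.exp (-r ^ 2)) = G 8 :=
    intervalIntegral.integral_Iic_add_Ioi hint.integrableOn hint.integrableOn
  have heven : (∫ r in Set.Iic (0:ℝ), r ^ 8 * Real.exp (-r ^ 2)) =
      ∫ r in Set.Ioi (0:ℝ), r ^ 8 * Real.exp (-r ^ 2) := by
    have h := integral_comp_neg_Ioi (0:ℝ) (fun r : ℝ => r ^ 8 * Real.exp (-r ^ 2))
    simp only [neg_zero] at h
    rw [← h]
    congr 1
    funext x
    rw [show ((-x) ^ 8 : ℝ) = x ^ 8 by ring, neg_sq]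
  rw [heven, G_eight] at hsplit
  linarith

def cnt (i j p q s l t : Fin 3) : ℕ :=
  (if i = t then 1 else 0) + (if j = t then 1 else 0) + (if p = t then 1 else 0) +
    (if q = t then 1 else 0) + (if s = t then 1 else 0) + (if l = t then 1 else 0)

lemma mono_eq (i j p q s l : Fin 3) (y : Fin 3 → ℝ) :
    y i * y j * y p * y q * y s * y l * Real.exp (-∑ t, y t ^ 2)
      = ∏ t, (y t ^ cnt i j p q s l t * Real.exp (-(y t) ^ 2)) := by
  have e1 : ∀ a : Fin 3, y a = ∏ t, y t ^ (if a = t then 1 else 0) := by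
    intro a
    simp [pow_ite]
  have e2 : Real.exp (-∑ t, y t ^ 2) = ∏ t, Real.exp (-(y t) ^ 2) := by
    rw [← Real.exp_sum]
    congr 1
    rw [← Finset.sum_neg_distrib]
  rw [e2]
  nth_rewrite 1 [e1 i]
  nth_rewrite 1 [e1 j]
  nth_rewrite 1 [e1 p]
  nth_rewrite 1 [e1 q]
  nth_rewrite 1 [e1 s]
  nth_rewrite 1 [e1 l]
  simp only [← Finset.prod_mul_distrib]
  exact Finset.prod_congr rfl fun t _ => by simp only [cnt]; ring

lemma mono_int (i j p q s l : Fin 3) :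
    ∫ y : Fin 3 → ℝ, y i * y j * y p * y q * y s * y l * Real.exp (-∑ t, y t ^ 2)
      = ∏ t, G (cnt i j p q s l t) := by
  simp_rw [mono_eq]
  rw [volume_pi, integral_fintype_prod_eq_prod (ι := Fin 3)
    (f := fun t (x : ℝ) => x ^ cnt i j p q s l t * Real.exp (-x ^ 2))]
  rfl

lemma mono_integrable (i j p q s l : Fin 3) :
    Integrable (fun y : Fin 3 → ℝ =>
      y i * y j * y p * y q * y s * y l * Real.exp (-∑ t, y t ^ 2)) := by
  have h := Integrable.fintype_prod_dep
    (f := fun t (x : ℝ) => x ^ cnt i j p q s l t * Real.exp (-x ^ 2))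
    (fun t => integrable_pow_exp _)
  exact h.congr (Filter.Eventually.of_forall fun y => (mono_eq i j p q s l y).symm)

lemma polar (P : E3 → ℝ) (hhom : ∀ c : ℝ, 0 < c → ∀ x : E3, P (c • x) = c ^ 6 * P x) :
    ∫ x : E3, P x * Real.exp (-‖x‖ ^ 2) =
      (∫ ω, P ω ∂(volume : Measure E3).toSphere) *
        ∫ r in Set.Ioi (0:ℝ), r ^ 8 * Real.exp (-r ^ 2) := by
  have hdim : Module.finrank ℝ E3 = 3 := by simp
  have h := ((volume : Measure E3).measurePreserving_homeomorphUnitSphereProd).integral_comp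
    (Homeomorph.measurableEmbedding _)
    (fun p : sphere (0:E3) 1 × Ioi (0:ℝ) => P p.1.1 * (p.2.1 ^ 6 * Real.exp (-p.2.1 ^ 2)))
  simp only [hdim] at h
  norm_num at h
  have heq : (fun x : ({(0:E3)}ᶜ : Set E3) => P x.1 * Real.exp (-‖x.1‖ ^ 2)) =
      fun x : ({(0:E3)}ᶜ : Set E3) =>
        P (‖(x:E3)‖⁻¹ • (x:E3)) * (‖(x:E3)‖ ^ 6 * Real.exp (-‖(x:E3)‖ ^ 2)) := by
    funext x
    have hx : (x : E3) ≠ 0 := x.2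
    have hn : (0:ℝ) < ‖(x : E3)‖ := norm_pos_iff.2 hx
    have hP : P ((x:E3)) = ‖(x:E3)‖ ^ 6 * P (‖(x:E3)‖⁻¹ • (x:E3)) := by
      have := hhom ‖(x:E3)‖ hn (‖(x:E3)‖⁻¹ • (x:E3))
      rwa [smul_smul, mul_inv_cancel₀ hn.ne', one_smul] at this
    rw [hP]; ring
  calc
    ∫ x : E3, P x * Real.exp (-‖x‖ ^ 2)
        = ∫ x : ({(0:E3)}ᶜ : Set E3), P x.1 * Real.exp (-‖x.1‖ ^ 2)
            ∂((volume : Measure E3).comap Subtype.val) := by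
          rw [integral_subtype_comap (measurableSet_singleton _).compl
            fun x ↦ P x * Real.exp (-‖x‖ ^ 2), MeasureTheory.restrict_compl_singleton]
    _ = ∫ p : sphere (0:E3) 1 × Ioi (0:ℝ),
          P p.1.1 * (p.2.1 ^ 6 * Real.exp (-p.2.1 ^ 2))
          ∂((volume : Measure E3).toSphere.prod (.volumeIoiPow 2)) := by
          rw [← h]
          exact congrArg (fun f => ∫ x : ({(0:E3)}ᶜ : Set E3), f x
            ∂((volume : Measure E3).comap Subtype.val)) heq
    _ = (∫ ω, P ω ∂(volume : Measure E3).toSphere) *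
          ∫ r : Ioi (0:ℝ), r.1 ^ 6 * Real.exp (-r.1 ^ 2) ∂(Measure.volumeIoiPow 2) :=
          integral_prod_mul (f := fun ω : sphere (0:E3) 1 => P ω.1)
            (g := fun r : Ioi (0:ℝ) => r.1 ^ 6 * Real.exp (-r.1 ^ 2))
    _ = (∫ ω, P ω ∂(volume : Measure E3).toSphere) *
          ∫ r in Set.Ioi (0:ℝ), r ^ 8 * Real.exp (-r ^ 2) := by
          congr 1
          simp only [Measure.volumeIoiPow, ENNReal.ofReal]
          rw [integral_withDensity_eq_integral_smul
            ((measurable_subtype_coe.pow_const _).real_toNNReal),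
            integral_subtype_comap measurableSet_Ioi
              fun a : ℝ ↦ Real.toNNReal (a ^ 2) • (a ^ 6 * Real.exp (-a ^ 2))]
          refine setIntegral_congr_fun measurableSet_Ioi fun x hx ↦ ?_
          rw [NNReal.smul_def, Real.coe_toNNReal _ (pow_nonneg hx.out.le _), smul_eq_mul]
          ring

lemma gauss_eval (k : Matrix (Fin 3) (Fin 3) ℝ) (s l : Fin 3) :
    ∫ x : E3, (quadForm k x ^ 2 * x s * x l) * Real.exp (-‖x‖ ^ 2)
      = ∑ i, ∑ j, ∑ p, ∑ q, k i j * k p q * ∏ t, G (cnt i j p q s l t) := by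
  have hnrm : (fun x : E3 => (quadForm k x ^ 2 * x s * x l) * Real.exp (-‖x‖ ^ 2)) =
      fun x : E3 => (quadForm k x ^ 2 * x s * x l) * Real.exp (-∑ t, x t ^ 2) := by
    funext x
    have hx : ‖x‖ ^ 2 = ∑ t, x t ^ 2 := by
      rw [EuclideanSpace.norm_eq, Real.sq_sqrt (by positivity)]
      exact Finset.sum_congr rfl fun t _ => by rw [Real.norm_eq_abs, sq_abs]
    rw [hx]
  rw [hnrm]
  have htrans := MeasurePreserving.integral_comp'
    (f := (MeasurableEquiv.toLp 2 (Fin 3 → ℝ)))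
    ((EuclideanSpace.volume_preserving_symm_measurableEquiv_toLp (Fin 3)).symm)
    (fun x : E3 => (quadForm k x ^ 2 * x s * x l) * Real.exp (-∑ t, x t ^ 2))
  rw [← htrans]
  have hco : (fun y : Fin 3 → ℝ =>
      (quadForm k ((MeasurableEquiv.toLp 2 (Fin 3 → ℝ)) y) ^ 2 *
        ((MeasurableEquiv.toLp 2 (Fin 3 → ℝ)) y) s *
        ((MeasurableEquiv.toLp 2 (Fin 3 → ℝ)) y) l) *
        Real.exp (-∑ t, ((MeasurableEquiv.toLp 2 (Fin 3 → ℝ)) y) t ^ 2)) =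
      fun y : Fin 3 → ℝ =>
        ∑ z : Fin 3 × Fin 3 × Fin 3 × Fin 3, k z.1 z.2.1 * k z.2.2.1 z.2.2.2 *
          (y z.1 * y z.2.1 * y z.2.2.1 * y z.2.2.2 * y s * y l * Real.exp (-∑ t, y t ^ 2)) := by
    funext y
    show (quadForm k ((EuclideanSpace.equiv (Fin 3) ℝ).symm y) ^ 2 * y s * y l) *
        Real.exp (-∑ t, y t ^ 2) = _
    simp only [Fintype.sum_prod_type]
    simp only [quadForm, Fin.sum_univ_three]
    show ((k 0 0 * y 0 * y 0 + k 0 1 * y 0 * y 1 + k 0 2 * y 0 * y 2 +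
      (k 1 0 * y 1 * y 0 + k 1 1 * y 1 * y 1 + k 1 2 * y 1 * y 2) +
      (k 2 0 * y 2 * y 0 + k 2 1 * y 2 * y 1 + k 2 2 * y 2 * y 2)) ^ 2 * y s * y l) *
      Real.exp (-(y 0 ^ 2 + y 1 ^ 2 + y 2 ^ 2)) = _
    ring
  rw [hco]
  rw [integral_finset_sum _ (fun z _ => ((mono_integrable z.1 z.2.1 z.2.2.1 z.2.2.2 s l).const_mul _))]
  simp_rw [integral_const_mul, mono_int]
  rw [Fintype.sum_prod_type]
  simp_rw [Fintype.sum_prod_type]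

lemma G_one : G 1 = 0 := G_odd ⟨0, rfl⟩
lemma G_three : G 3 = 0 := G_odd ⟨1, rfl⟩
lemma G_five : G 5 = 0 := G_odd ⟨2, rfl⟩

set_option maxHeartbeats 4000000 in
lemma bigsum_eval (k : Matrix (Fin 3) (Fin 3) ℝ) (h10 : k 1 0 = k 0 1) (h20 : k 2 0 = k 0 2)
    (h21 : k 2 1 = k 1 2) (s l : Fin 3) :
    ∑ i, ∑ j, ∑ p, ∑ q, k i j * k p q * ∏ t, G (cnt i j p q s l t) =
      4 * (Real.sqrt π * Real.sqrt π) / 105 *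
        ((k.trace ^ 2 + 2 * ∑ i, ∑ j, (k i j) ^ 2) * (if s = l then 1 else 0) +
          4 * k.trace * k s l + 8 * ∑ t, k s t * k t l) * (105 / 32 * Real.sqrt π) := by
  have hS : ∀ u : Fin 3, u = 0 ∨ u = 1 ∨ u = 2 := by decide
  rcases hS s with rfl | rfl | rfl <;> rcases hS l with rfl | rfl | rfl <;>
  · simp only [cnt, Fin.sum_univ_three, Fin.prod_univ_three, Matrix.trace, Matrix.diag,
      show ((0:Fin 3) = 0) = True from by simp, show ((1:Fin 3) = 1) = True from by simp,
      show ((2:Fin 3) = 2) = True from by simp,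
      show ((0:Fin 3) = 1) = False from by simp [Fin.ext_iff],
      show ((0:Fin 3) = 2) = False from by simp [Fin.ext_iff],
      show ((1:Fin 3) = 0) = False from by simp [Fin.ext_iff],
      show ((1:Fin 3) = 2) = False from by simp [Fin.ext_iff],
      show ((2:Fin 3) = 0) = False from by simp [Fin.ext_iff],
      show ((2:Fin 3) = 1) = False from by simp [Fin.ext_iff], if_true, if_false, Nat.reduceAdd,
      G_zero, G_two, G_four, G_six, G_one, G_three, G_five, h10, h20, h21]
    ring

end SphereMoment

set_option maxHeartbeats 1000000 in
open SphereMoment Set Metric in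
/-- For a symmetric `3×3` matrix `k` and indices `s, l`:
`∫_{𝕊²} ⟨kx,x⟩² x^s xˡ dμ
  = (4π/105) (((tr k)² + 2‖k‖²) δ_{sl} + 4 (tr k) k_{sl} + 8 (k²)_{sl})`. -/
theorem sphere_quadlinear_moment (k : Matrix (Fin 3) (Fin 3) ℝ) (hk : k.IsSymm)
    (s l : Fin 3) :
    ∫ x, quadForm k x ^ 2 * x s * x l ∂sphereMeasure2 =
      4 * π / 105 *
        ((k.trace ^ 2 + 2 * ∑ i, ∑ j, (k i j) ^ 2) * (if s = l then 1 else 0) +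
          4 * k.trace * k s l + 8 * ∑ t, k s t * k t l) := by
  classical
  have hmap : ∫ x, quadForm k x ^ 2 * x s * x l ∂sphereMeasure2
      = ∫ ω, (fun x : EuclideanSpace ℝ (Fin 3) => quadForm k x ^ 2 * x s * x l) ω
          ∂(volume : Measure (EuclideanSpace ℝ (Fin 3))).toSphere := by
    rw [sphereMeasure2]
    exact (MeasurableEmbedding.subtype_coe
      (isClosed_sphere (x := (0 : EuclideanSpace ℝ (Fin 3))) (ε := 1)).measurableSet).integral_map _
  have hhom : ∀ c : ℝ, 0 < c → ∀ x : EuclideanSpace ℝ (Fin 3),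
      (fun x : EuclideanSpace ℝ (Fin 3) => quadForm k x ^ 2 * x s * x l) (c • x)
        = c ^ 6 * (fun x : EuclideanSpace ℝ (Fin 3) => quadForm k x ^ 2 * x s * x l) x := by
    intro c hc x
    have hq : quadForm k (c • x) = c ^ 2 * quadForm k x := by
      simp only [quadForm, PiLp.smul_apply, smul_eq_mul, Finset.mul_sum]
      exact Finset.sum_congr rfl fun i _ => Finset.sum_congr rfl fun j _ => by ring
    have h1 : (c • x) s = c * x s := rfl
    have h2 : (c • x) l = c * x l := rfl
    simp only [hq, h1, h2]
    ring
  have key : (∫ ω, (fun x : EuclideanSpace ℝ (Fin 3) => quadForm k x ^ 2 * x s * x l) ω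
      ∂(volume : Measure (EuclideanSpace ℝ (Fin 3))).toSphere) * (105 / 32 * Real.sqrt π)
      = ∑ i, ∑ j, ∑ p, ∑ q, k i j * k p q * ∏ t, G (cnt i j p q s l t) := by
    rw [← radial_integral,
      ← polar (fun x : EuclideanSpace ℝ (Fin 3) => quadForm k x ^ 2 * x s * x l) hhom]
    exact gauss_eval k s l
  have hne : (105 / 32 * Real.sqrt π) ≠ 0 := by
    have hsp : Real.sqrt π > 0 := Real.sqrt_pos.2 pi_pos
    positivity
  have h10 : k 1 0 = k 0 1 := congrFun (congrFun hk 0) 1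
  have h20 : k 2 0 = k 0 2 := congrFun (congrFun hk 0) 2
  have h21 : k 2 1 = k 1 2 := congrFun (congrFun hk 1) 2
  rw [hmap, show (4:ℝ) * π / 105 = 4 * (Real.sqrt π * Real.sqrt π) / 105 from by
    rw [Real.mul_self_sqrt pi_pos.le]]
  apply mul_right_cancel₀ hne
  rw [key]
  exact bigsum_eval k h10 h20 h21 s l
end

section
/- Let k be a symmetric 3×3 real matrix and r > 0. Let S_r be the sphere of radius r centered at the origin in ℝ³ with surface measure μ, with outward unit normal ν = x/r, mean curvature H = 2/r, and P(x) = tr k − ⟨kν, ν⟩. Then the Hawking energy 𝓔(S_r) := √(μ(S_r)/(16π)) · ( 1 − (1/(16π)) ∫_{S_r} (H² − P²) dμ ) satisfies exactly 𝓔(S_r) = (r³/12) ( (3/5)(tr k)² + (1/5)‖k‖² ), where ‖k‖² = Σ_{i,j} k_{ij}². -/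
open MeasureTheory Real
open Set Metric

/-- The surface measure on the sphere of radius `r` centered at the origin in `ℝ³`
(induced from Lebesgue measure): the pushforward under `x ↦ r • x` of `r²` times the
surface measure of the unit sphere. -/
noncomputable def sphereMeasureR (r : ℝ) : Measure (EuclideanSpace ℝ (Fin 3)) :=
  Measure.map (fun x => r • x) (ENNReal.ofReal (r ^ 2) • sphereMeasure2)

/-- The trace of `k` restricted to the tangent plane of `S_r` at `x`:
`P(x) = tr k − ⟨kν, ν⟩` with `ν = x/r`. -/
noncomputable def traceRestricted (k : Matrix (Fin 3) (Fin 3) ℝ) (r : ℝ)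
    (x : EuclideanSpace ℝ (Fin 3)) : ℝ :=
  k.trace - ∑ i, ∑ j, k i j * (x i / r) * (x j / r)

/-- The Hawking energy of the round sphere `S_r` in flat initial data `(ℝ³, δ, k)` with
constant second fundamental form `k`, where `H = 2/r`:
`𝓔(S_r) = √(|S_r|/(16π)) (1 − (1/(16π)) ∫_{S_r} (H² − P²) dμ)`. -/
noncomputable def hawkingEnergy (k : Matrix (Fin 3) (Fin 3) ℝ) (r : ℝ) : ℝ :=
  Real.sqrt ((sphereMeasureR r Set.univ).toReal / (16 * π)) *
    (1 - 1 / (16 * π) *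
      ∫ x, ((2 / r) ^ 2 - (traceRestricted k r x) ^ 2) ∂(sphereMeasureR r))

noncomputable def mval (n : ℕ) : ℝ := ∫ t : ℝ, t ^ n * rexp (-t ^ 2)
noncomputable def Rrad (q : ℕ) : ℝ := ∫ r in Ioi (0:ℝ), r ^ q * rexp (-r ^ 2)

lemma integrable_mom (n : ℕ) : Integrable (fun t : ℝ => t ^ n * rexp (-t ^ 2)) := by
  have := integrable_rpow_mul_exp_neg_mul_sq (b := 1) one_pos (s := n) (lt_of_lt_of_le neg_one_lt_zero (Nat.cast_nonneg n))
  simpa [Real.rpow_natCast] using this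

lemma Rrad_eq (q : ℕ) : Rrad q = 1 / 2 * Real.Gamma ((q + 1) / 2) := by
  rw [Rrad, ← integral_rpow_mul_exp_neg_rpow (p := 2) (q := q) two_pos (lt_of_lt_of_le neg_one_lt_zero (Nat.cast_nonneg q))]
  refine setIntegral_congr_fun measurableSet_Ioi fun x hx => ?_
  rw [← Real.rpow_natCast x q, ← Real.rpow_two]

lemma Gamma32 : Real.Gamma (3/2) = Real.sqrt π / 2 := by
  rw [show (3/2 : ℝ) = 1/2 + 1 by norm_num, Real.Gamma_add_one (by norm_num), Real.Gamma_one_half_eq]; ring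
lemma Gamma52 : Real.Gamma (5/2) = 3 * Real.sqrt π / 4 := by
  rw [show (5/2 : ℝ) = 3/2 + 1 by norm_num, Real.Gamma_add_one (by norm_num), Gamma32]; ring
lemma Gamma72 : Real.Gamma (7/2) = 15 * Real.sqrt π / 8 := by
  rw [show (7/2 : ℝ) = 5/2 + 1 by norm_num, Real.Gamma_add_one (by norm_num), Gamma52]; ring

lemma Rrad2 : Rrad 2 = Real.sqrt π / 4 := by rw [Rrad_eq]; norm_num [Gamma32]; ring
lemma Rrad4 : Rrad 4 = 3 * Real.sqrt π / 8 := by rw [Rrad_eq]; norm_num [Gamma52]; ring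
lemma Rrad6 : Rrad 6 = 15 * Real.sqrt π / 16 := by rw [Rrad_eq]; norm_num [Gamma72]; ring

lemma mval_even {n : ℕ} (hn : Even n) : mval n = Real.Gamma ((n + 1) / 2) := by
  have h : ∀ t : ℝ, |t| ^ n * rexp (-|t| ^ 2) = t ^ n * rexp (-t ^ 2) := by
    intro t; rw [hn.pow_abs, sq_abs]
  calc mval n = ∫ t : ℝ, |t| ^ n * rexp (-|t| ^ 2) := by
        rw [mval]; congr 1; ext t; rw [h]
    _ = 2 * Rrad n := integral_comp_abs (f := fun s => s ^ n * rexp (-s ^ 2))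
    _ = _ := by rw [Rrad_eq]; ring

lemma mval_odd {n : ℕ} (hn : Odd n) : mval n = 0 := by
  have h : ∫ t : ℝ, (fun s : ℝ => s ^ n * rexp (-s ^ 2)) (-t) = mval n := integral_neg_eq_self (fun s : ℝ => s ^ n * rexp (-s ^ 2)) volume
  simp only [hn.neg_pow, neg_sq, neg_mul] at h
  rw [integral_neg] at h
  rw [mval] at h ⊢; linarith

lemma mval0 : mval 0 = Real.sqrt π := by rw [mval_even Even.zero]; norm_num [Real.Gamma_one_half_eq]
lemma mval1 : mval 1 = 0 := mval_odd odd_one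
lemma mval2 : mval 2 = Real.sqrt π / 2 := by rw [mval_even (by decide)]; norm_num [Gamma32]
lemma mval3 : mval 3 = 0 := mval_odd (by decide)
lemma mval4 : mval 4 = 3 * Real.sqrt π / 4 := by rw [mval_even (by decide)]; norm_num [Gamma52]

abbrev E3 := EuclideanSpace ℝ (Fin 3)

lemma norm_sq_E3 (x : E3) : ‖x‖ ^ 2 = ∑ i, (x i) ^ 2 := by
  rw [EuclideanSpace.norm_eq, Real.sq_sqrt (by positivity)]
  simp [sq_abs]

lemma exp_norm_prod (x : E3) : rexp (-‖x‖ ^ 2) = ∏ i, rexp (-(x i) ^ 2) := by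
  rw [norm_sq_E3, ← Real.exp_sum]
  congr 1
  simp

lemma gaussE (c : Fin 3 → ℕ) :
    ∫ x : E3, (∏ t, (x t) ^ (c t)) * rexp (-‖x‖ ^ 2) = ∏ t, mval (c t) := by
  have he := (EuclideanSpace.volume_preserving_symm_measurableEquiv_toLp (Fin 3)).symm
  have h1 : ∫ x : E3, (∏ t, (x t) ^ (c t)) * rexp (-‖x‖ ^ 2)
      = ∫ y : Fin 3 → ℝ, ∏ t, ((y t) ^ (c t) * rexp (-(y t) ^ 2)) := by
    rw [← he.integral_comp (MeasurableEquiv.toLp 2 (Fin 3 → ℝ)).measurableEmbedding]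
    congr 1; ext y
    rw [exp_norm_prod, ← Finset.prod_mul_distrib]
    rfl
  rw [h1, volume_pi, MeasureTheory.integral_fintype_prod_eq_prod (fun t (s : ℝ) => s ^ (c t) * rexp (-s ^ 2))]
  rfl

lemma integrable_gaussE (c : Fin 3 → ℕ) :
    Integrable (fun x : E3 => (∏ t, (x t) ^ (c t)) * rexp (-‖x‖ ^ 2)) := by
  have he := (EuclideanSpace.volume_preserving_symm_measurableEquiv_toLp (Fin 3)).symm
  rw [← he.integrable_comp_emb (MeasurableEquiv.toLp 2 (Fin 3 → ℝ)).measurableEmbedding]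
  have : Integrable (fun y : Fin 3 → ℝ => ∏ t, ((y t) ^ (c t) * rexp (-(y t) ^ 2))) :=
    Integrable.fintype_prod fun t => integrable_mom (c t)
  apply this.congr
  filter_upwards with y
  rw [Function.comp_apply, exp_norm_prod, ← Finset.prod_mul_distrib]
  rfl

lemma prod_single (x : E3) (i : Fin 3) : (∏ t, (x t) ^ (if t = i then 1 else 0)) = x i := by
  simp [pow_ite, Finset.prod_ite_eq']

noncomputable def c2 (i j : Fin 3) : Fin 3 → ℕ := fun t => (if t = i then 1 else 0) + (if t = j then 1 else 0)
noncomputable def c4 (i j l m : Fin 3) : Fin 3 → ℕ := fun t =>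
  (if t = i then 1 else 0) + (if t = j then 1 else 0) + (if t = l then 1 else 0) + (if t = m then 1 else 0)

lemma prod_c2 (x : E3) (i j : Fin 3) : (∏ t, (x t) ^ (c2 i j t)) = x i * x j := by
  simp only [c2, pow_add, Finset.prod_mul_distrib, prod_single]

lemma prod_c4 (x : E3) (i j l m : Fin 3) : (∏ t, (x t) ^ (c4 i j l m t)) = x i * x j * (x l * x m) := by
  simp only [c4, pow_add, Finset.prod_mul_distrib, prod_single]; ring

lemma gauss2 (i j : Fin 3) : ∫ x : E3, x i * x j * rexp (-‖x‖ ^ 2)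
    = (if i = j then 1 else 0) * (Real.sqrt π ^ 3 / 2) := by
  have h := gaussE (c2 i j)
  simp only [prod_c2] at h
  rw [h]
  fin_cases i <;> fin_cases j <;>
    norm_num (config := {decide := true}) [Fin.prod_univ_three, c2, mval0, mval1, mval2] <;> ring

set_option maxHeartbeats 2000000 in
lemma gauss4 (i j l m : Fin 3) : ∫ x : E3, x i * x j * (x l * x m) * rexp (-‖x‖ ^ 2)
    = ((if i = j then (1:ℝ) else 0) * (if l = m then 1 else 0)
      + (if i = l then 1 else 0) * (if j = m then 1 else 0)
      + (if i = m then 1 else 0) * (if j = l then 1 else 0)) * (Real.sqrt π ^ 3 / 4) := by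
  have h := gaussE (c4 i j l m)
  simp only [prod_c4] at h
  rw [h]
  fin_cases i <;> fin_cases j <;> fin_cases l <;> fin_cases m <;>
    norm_num (config := {decide := true}) [Fin.prod_univ_three, c4, mval0, mval1, mval2, mval3, mval4] <;> ring

lemma finrank_E3 : Module.finrank ℝ E3 = 3 := by simp

lemma transfer (g : E3 → ℝ) (hg : Continuous g) (n : ℕ)
    (hhom : ∀ (c : ℝ), 0 < c → ∀ x, g (c • x) = c ^ n * g x) :
    ∫ x : E3, g x * rexp (-‖x‖ ^ 2) =
      (∫ x, g x ∂sphereMeasure2) * Rrad (n + 2) := by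
  have h5 : ∫ x, g x ∂sphereMeasure2 = ∫ ω, g ω.1 ∂(volume : Measure E3).toSphere := by
    rw [sphereMeasure2, integral_map measurable_subtype_coe.aemeasurable hg.aestronglyMeasurable]
  have key := ((volume : Measure E3).measurePreserving_homeomorphUnitSphereProd).integral_comp
    (Homeomorph.measurableEmbedding _)
    (fun p : sphere (0:E3) 1 × Ioi (0:ℝ) => g p.1.1 * ((p.2.1 : ℝ) ^ n * rexp (-(p.2.1 : ℝ) ^ 2)))
  rw [finrank_E3] at key
  simp only [Nat.reduceSub] at key
  calc ∫ x : E3, g x * rexp (-‖x‖ ^ 2)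
      = ∫ x : ({0}ᶜ : Set E3), (fun y : E3 => g y * rexp (-‖y‖ ^ 2)) x.1
          ∂((volume : Measure E3).comap Subtype.val) := by
        rw [MeasureTheory.integral_subtype_comap (measurableSet_singleton (0:E3)).compl
          (fun y : E3 => g y * rexp (-‖y‖ ^ 2)), MeasureTheory.restrict_compl_singleton]
    _ = ∫ p : sphere (0:E3) 1 × Ioi (0:ℝ),
          g p.1.1 * ((p.2.1 : ℝ) ^ n * rexp (-(p.2.1 : ℝ) ^ 2))
          ∂((volume : Measure E3).toSphere.prod (Measure.volumeIoiPow 2)) := by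
        rw [← key]
        refine integral_congr_ae (Filter.Eventually.of_forall fun x => ?_)
        have hx : (x : E3) ≠ 0 := x.2
        have hnorm : (0:ℝ) < ‖(x : E3)‖ := norm_pos_iff.2 hx
        have h0 : (‖(x:E3)‖:ℝ) ^ n ≠ 0 := pow_ne_zero _ hnorm.ne'
        simp only [homeomorphUnitSphereProd_apply_fst_coe, homeomorphUnitSphereProd_apply_snd_coe]
        rw [hhom _ (inv_pos.2 hnorm), inv_pow]
        field_simp
    _ = (∫ ω, g ω.1 ∂(volume : Measure E3).toSphere) *
          ∫ r : Ioi (0:ℝ), (r.1 : ℝ) ^ n * rexp (-(r.1:ℝ) ^ 2) ∂(Measure.volumeIoiPow 2) :=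
        integral_prod_mul (fun ω : sphere (0:E3) 1 => g ω.1)
          (fun r : Ioi (0:ℝ) => (r.1:ℝ) ^ n * rexp (-(r.1:ℝ) ^ 2))
    _ = _ := by
        rw [h5]
        congr 1
        simp only [Measure.volumeIoiPow, ENNReal.ofReal]
        rw [integral_withDensity_eq_integral_smul
          ((measurable_subtype_coe.pow_const _).real_toNNReal),
          MeasureTheory.integral_subtype_comap measurableSet_Ioi
            (fun a : ℝ => (a ^ 2).toNNReal • (a ^ n * rexp (-a ^ 2))), Rrad]
        refine setIntegral_congr_fun measurableSet_Ioi fun a ha => ?_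
        rw [NNReal.smul_def, Real.coe_toNNReal _ (by positivity), smul_eq_mul]
        ring

noncomputable def Qf (k : Matrix (Fin 3) (Fin 3) ℝ) (x : E3) : ℝ := ∑ i, ∑ j, k i j * x i * x j

lemma cont_coord (i : Fin 3) : Continuous (fun x : E3 => x i) := (EuclideanSpace.proj i).continuous

lemma cont_Qf (k : Matrix (Fin 3) (Fin 3) ℝ) : Continuous (Qf k) := by
  unfold Qf
  refine continuous_finset_sum _ fun i _ => continuous_finset_sum _ fun j _ => ?_
  exact (continuous_const.mul (cont_coord i)).mul (cont_coord j)

lemma int2 (i j : Fin 3) : Integrable (fun x : E3 => x i * x j * rexp (-‖x‖ ^ 2)) := by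
  have := integrable_gaussE (c2 i j)
  simpa only [prod_c2] using this

lemma int4 (i j l m : Fin 3) :
    Integrable (fun x : E3 => x i * x j * (x l * x m) * rexp (-‖x‖ ^ 2)) := by
  have := integrable_gaussE (c4 i j l m)
  simpa only [prod_c4] using this

lemma sqrtpi_pos : (0:ℝ) < Real.sqrt π := Real.sqrt_pos.2 Real.pi_pos

lemma sigma_one : ∫ _x : E3, (1:ℝ) ∂sphereMeasure2 = 4 * π := by
  have h := transfer (fun _ => 1) continuous_const 0 (by intro c hc x; simp)
  have h2 := gaussE (fun _ => 0)
  simp only [pow_zero, Finset.prod_const_one, one_mul, mval0, Finset.prod_const,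
    Finset.card_univ, Fintype.card_fin] at h2
  simp only [one_mul] at h
  rw [h2, Rrad2] at h
  have hs := sqrtpi_pos
  have hπ : Real.sqrt π * Real.sqrt π = π := Real.mul_self_sqrt Real.pi_nonneg
  have key : (∫ _x : E3, (1:ℝ) ∂sphereMeasure2) * (Real.sqrt π / 4) = 4 * π * (Real.sqrt π / 4) := by
    linear_combination -h + Real.sqrt π * hπ
  exact mul_right_cancel₀ (by positivity) key

lemma sigma_Q (k : Matrix (Fin 3) (Fin 3) ℝ) :
    ∫ x, Qf k x ∂sphereMeasure2 = 4 * π / 3 * k.trace := by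
  have hom : ∀ (c : ℝ), 0 < c → ∀ x : E3, Qf k (c • x) = c ^ 2 * Qf k x := by
    intro c hc x
    simp only [Qf, PiLp.smul_apply, smul_eq_mul, Finset.mul_sum]
    exact Finset.sum_congr rfl fun i _ => Finset.sum_congr rfl fun j _ => by ring
  have h := transfer (Qf k) (cont_Qf k) 2 hom
  have hE : ∫ x : E3, Qf k x * rexp (-‖x‖ ^ 2)
      = ∑ i, ∑ j, k i j * ((if i = j then (1:ℝ) else 0) * (Real.sqrt π ^ 3 / 2)) := by
    have hpt : ∀ x : E3, Qf k x * rexp (-‖x‖ ^ 2)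
        = ∑ i, ∑ j, k i j * (x i * x j * rexp (-‖x‖ ^ 2)) := by
      intro x
      simp only [Qf, Finset.sum_mul]
      exact Finset.sum_congr rfl fun i _ => Finset.sum_congr rfl fun j _ => by ring
    rw [integral_congr_ae (Filter.Eventually.of_forall hpt),
      integral_finset_sum _ (fun i _ => integrable_finset_sum _ fun j _ => Integrable.const_mul (int2 i j) (k i j))]
    refine Finset.sum_congr rfl fun i _ => ?_
    rw [integral_finset_sum _ (fun j _ => Integrable.const_mul (int2 i j) (k i j))]
    refine Finset.sum_congr rfl fun j _ => ?_
    rw [integral_const_mul, gauss2]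
  rw [hE] at h
  have htr : ∑ i, ∑ j, k i j * ((if i = j then (1:ℝ) else 0) * (Real.sqrt π ^ 3 / 2))
      = k.trace * (Real.sqrt π ^ 3 / 2) := by
    simp only [mul_ite, mul_one, mul_zero, ite_mul, zero_mul, Finset.sum_ite_eq,
      Finset.mem_univ, if_true]
    rw [← Finset.sum_mul, Matrix.trace]
    simp [Matrix.diag]
  rw [htr, Rrad4] at h
  have hs := sqrtpi_pos
  have hπ : Real.sqrt π * Real.sqrt π = π := Real.mul_self_sqrt Real.pi_nonneg
  have key : (∫ x, Qf k x ∂sphereMeasure2) * (3 * Real.sqrt π / 8)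
      = 4 * π / 3 * k.trace * (3 * Real.sqrt π / 8) := by
    linear_combination -h + (k.trace * Real.sqrt π / 2) * hπ
  exact mul_right_cancel₀ (by positivity) key

lemma homQ (k : Matrix (Fin 3) (Fin 3) ℝ) : ∀ (c : ℝ), 0 < c → ∀ x : E3,
    Qf k (c • x) = c ^ 2 * Qf k x := by
  intro c hc x
  simp only [Qf, PiLp.smul_apply, smul_eq_mul, Finset.mul_sum]
  exact Finset.sum_congr rfl fun i _ => Finset.sum_congr rfl fun j _ => by ring

lemma sigma_Q2 (k : Matrix (Fin 3) (Fin 3) ℝ) (hk : k.IsSymm) :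
    ∫ x, (Qf k x) ^ 2 ∂sphereMeasure2
      = 4 * π / 15 * (k.trace ^ 2 + 2 * ∑ i, ∑ j, (k i j) ^ 2) := by
  have hom : ∀ (c : ℝ), 0 < c → ∀ x : E3, (Qf k (c • x)) ^ 2 = c ^ 4 * (Qf k x) ^ 2 := by
    intro c hc x; rw [homQ k c hc x]; ring
  have h := transfer (fun x => (Qf k x) ^ 2) ((cont_Qf k).pow 2) 4 hom
  have hE : ∫ x : E3, (Qf k x) ^ 2 * rexp (-‖x‖ ^ 2)
      = ∑ i, ∑ j, ∑ l, ∑ m, k i j * k l m *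
          (((if i = j then (1:ℝ) else 0) * (if l = m then 1 else 0)
            + (if i = l then 1 else 0) * (if j = m then 1 else 0)
            + (if i = m then 1 else 0) * (if j = l then 1 else 0)) * (Real.sqrt π ^ 3 / 4)) := by
    have hpt : ∀ x : E3, (Qf k x) ^ 2 * rexp (-‖x‖ ^ 2)
        = ∑ i, ∑ j, ∑ l, ∑ m, k i j * k l m * (x i * x j * (x l * x m) * rexp (-‖x‖ ^ 2)) := by
      intro x
      rw [sq]
      simp only [Qf, Finset.sum_mul, Finset.mul_sum]
      refine Finset.sum_congr rfl fun i _ => Finset.sum_congr rfl fun j _ => ?_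
      refine Finset.sum_congr rfl fun l _ => Finset.sum_congr rfl fun m _ => by ring
    rw [integral_congr_ae (Filter.Eventually.of_forall hpt),
      integral_finset_sum Finset.univ
        (f := fun i (a : E3) => ∑ j, ∑ l, ∑ m,
          k i j * k l m * (a i * a j * (a l * a m) * rexp (-‖a‖ ^ 2)))
        (fun i _ => integrable_finset_sum _ fun j _ =>
          integrable_finset_sum _ fun l _ => integrable_finset_sum _ fun m _ =>
            Integrable.const_mul (int4 i j l m) (k i j * k l m))]
    refine Finset.sum_congr rfl fun i _ => ?_
    rw [integral_finset_sum Finset.univ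
        (f := fun j (a : E3) => ∑ l, ∑ m,
          k i j * k l m * (a i * a j * (a l * a m) * rexp (-‖a‖ ^ 2)))
        (fun j _ => integrable_finset_sum _ fun l _ =>
          integrable_finset_sum _ fun m _ => Integrable.const_mul (int4 i j l m) (k i j * k l m))]
    refine Finset.sum_congr rfl fun j _ => ?_
    rw [integral_finset_sum Finset.univ
        (f := fun l (a : E3) => ∑ m,
          k i j * k l m * (a i * a j * (a l * a m) * rexp (-‖a‖ ^ 2)))
        (fun l _ => integrable_finset_sum _ fun m _ =>
          Integrable.const_mul (int4 i j l m) (k i j * k l m))]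
    refine Finset.sum_congr rfl fun l _ => ?_
    rw [integral_finset_sum Finset.univ
        (f := fun m (a : E3) => k i j * k l m * (a i * a j * (a l * a m) * rexp (-‖a‖ ^ 2)))
        (fun m _ => Integrable.const_mul (int4 i j l m) (k i j * k l m))]
    refine Finset.sum_congr rfl fun m _ => ?_
    rw [integral_const_mul, gauss4]
  rw [hE] at h
  have h10 : k 1 0 = k 0 1 := hk.apply 0 1
  have h20 : k 2 0 = k 0 2 := hk.apply 0 2
  have h21 : k 2 1 = k 1 2 := hk.apply 1 2
  have hsum : ∑ i, ∑ j, ∑ l, ∑ m, k i j * k l m *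
          (((if i = j then (1:ℝ) else 0) * (if l = m then 1 else 0)
            + (if i = l then 1 else 0) * (if j = m then 1 else 0)
            + (if i = m then 1 else 0) * (if j = l then 1 else 0)) * (Real.sqrt π ^ 3 / 4))
      = (k.trace ^ 2 + 2 * ∑ i, ∑ j, (k i j) ^ 2) * (Real.sqrt π ^ 3 / 4) := by
    norm_num (config := {decide := true}) [Fin.sum_univ_three, Matrix.trace_fin_three]
    rw [h10, h20, h21]; ring
  rw [hsum, Rrad6] at h
  have hs := sqrtpi_pos
  have hπ : Real.sqrt π * Real.sqrt π = π := Real.mul_self_sqrt Real.pi_nonneg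
  have key : (∫ x, (Qf k x) ^ 2 ∂sphereMeasure2) * (15 * Real.sqrt π / 16)
      = 4 * π / 15 * (k.trace ^ 2 + 2 * ∑ i, ∑ j, (k i j) ^ 2) * (15 * Real.sqrt π / 16) := by
    linear_combination -h + ((k.trace ^ 2 + 2 * ∑ i, ∑ j, (k i j) ^ 2) * Real.sqrt π / 4) * hπ
  exact mul_right_cancel₀ (by positivity) key

lemma integrable_sphere (f : E3 → ℝ) (hf : Continuous f) : Integrable f sphereMeasure2 := by
  rw [sphereMeasure2,
    (MeasurableEmbedding.subtype_coe (isClosed_sphere).measurableSet).integrable_map_iff]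
  obtain ⟨C, hC⟩ := (isCompact_univ (X := Metric.sphere (0:E3) 1)).exists_bound_of_continuousOn
    ((hf.comp continuous_subtype_val).continuousOn (s := Set.univ))
  refine (integrable_const C).mono' (hf.comp continuous_subtype_val).aestronglyMeasurable ?_
  filter_upwards with ω using (by simpa using hC ω trivial)

/-- Flat-space leading order expansion of the Hawking energy on round spheres:
`𝓔(S_r) = (r³/12) ((3/5)(tr k)² + (1/5)‖k‖²)` exactly. -/
theorem hawking_energy_flat_sphere (k : Matrix (Fin 3) (Fin 3) ℝ) (hk : k.IsSymm)
    (r : ℝ) (hr : 0 < r) :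
    hawkingEnergy k r =
      r ^ 3 / 12 * (3 / 5 * k.trace ^ 2 + 1 / 5 * ∑ i, ∑ j, (k i j) ^ 2) := by
  have hs := sqrtpi_pos
  have hπ0 : (0:ℝ) < π := Real.pi_pos
  have hfin : sphereMeasure2 Set.univ ≠ ⊤ := by
    rw [sphereMeasure2, Measure.map_apply measurable_subtype_coe MeasurableSet.univ]
    exact (measure_lt_top _ _).ne
  haveI hfm : IsFiniteMeasure sphereMeasure2 :=
    ⟨lt_top_iff_ne_top.2 hfin⟩
  have hσuniv : (sphereMeasure2 Set.univ).toReal = 4 * π := by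
    have h1 := sigma_one
    rwa [integral_const, smul_eq_mul, mul_one] at h1
  have hσofReal : sphereMeasure2 Set.univ = ENNReal.ofReal (4 * π) := by
    rw [← hσuniv, ENNReal.ofReal_toReal hfin]
  have hmeasφ : Measurable (fun x : E3 => r • x) := (continuous_const_smul r).measurable
  have hmass : (sphereMeasureR r Set.univ).toReal = 4 * π * r ^ 2 := by
    rw [sphereMeasureR, Measure.map_apply hmeasφ MeasurableSet.univ, Set.preimage_univ,
      Measure.smul_apply, smul_eq_mul, hσofReal, ← ENNReal.ofReal_mul (by positivity),
      ENNReal.toReal_ofReal (by positivity)]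
    ring
  set c := k.trace with hc
  set N := ∑ i, ∑ j, (k i j) ^ 2 with hN
  have cont_tr : Continuous (fun x : E3 => (2 / r) ^ 2 - (traceRestricted k r x) ^ 2) := by
    refine continuous_const.sub (Continuous.pow ?_ 2)
    refine continuous_const.sub
      (continuous_finset_sum _ fun i _ => continuous_finset_sum _ fun j _ => ?_)
    exact (continuous_const.mul ((cont_coord i).div_const r)).mul ((cont_coord j).div_const r)
  have hmap : ∫ x, ((2 / r) ^ 2 - (traceRestricted k r x) ^ 2) ∂(sphereMeasureR r)
      = r ^ 2 * ∫ y, ((2 / r) ^ 2 - (c - Qf k y) ^ 2) ∂sphereMeasure2 := by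
    rw [sphereMeasureR, integral_map hmeasφ.aemeasurable cont_tr.aestronglyMeasurable,
      integral_smul_measure, ENNReal.toReal_ofReal (by positivity), smul_eq_mul]
    congr 1
    refine integral_congr_ae (Filter.Eventually.of_forall fun y => ?_)
    have hdiv : ∀ i : Fin 3, ((r • y) i) / r = y i := fun i => by
      simp only [PiLp.smul_apply, smul_eq_mul]
      exact mul_div_cancel_left₀ _ hr.ne'
    simp only [traceRestricted, hdiv, Qf, hc]
  have isig : ∫ y, ((2 / r) ^ 2 - (c - Qf k y) ^ 2) ∂sphereMeasure2
      = (((2 / r) ^ 2 - c ^ 2) * (4 * π) + 2 * c * (4 * π / 3 * c))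
        - 4 * π / 15 * (c ^ 2 + 2 * N) := by
    have i2 : Integrable (fun y : E3 => Qf k y) sphereMeasure2 :=
      integrable_sphere _ (cont_Qf k)
    have i3 : Integrable (fun y : E3 => (Qf k y) ^ 2) sphereMeasure2 :=
      integrable_sphere _ ((cont_Qf k).pow 2)
    have hpt : ∀ y : E3, (2 / r) ^ 2 - (c - Qf k y) ^ 2
        = ((((2 / r) ^ 2 - c ^ 2) + (2 * c) * Qf k y)) - (Qf k y) ^ 2 := fun y => by ring
    have i12 : Integrable (fun y : E3 => ((2 / r) ^ 2 - c ^ 2) + (2 * c) * Qf k y)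
        sphereMeasure2 := by
      have h12 := Integrable.add (μ := sphereMeasure2)
        (integrable_const ((2 / r) ^ 2 - c ^ 2)) (i2.const_mul (2 * c))
      exact h12
    rw [integral_congr_ae (Filter.Eventually.of_forall hpt),
      integral_sub i12 i3,
      integral_add (integrable_const _) (i2.const_mul _), integral_const, integral_const_mul,
      sigma_Q, sigma_Q2 k hk, measureReal_def, hσuniv, smul_eq_mul]
    rw [← hc, ← hN]
    ring
  have hsqrt : Real.sqrt ((sphereMeasureR r Set.univ).toReal / (16 * π)) = r / 2 := by
    rw [hmass, show 4 * π * r ^ 2 / (16 * π) = (r / 2) ^ 2 by field_simp; ring]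
    exact Real.sqrt_sq (by positivity)
  rw [hawkingEnergy, hsqrt, hmap, isig]
  have hr' : r ≠ 0 := hr.ne'
  field_simp
  ring
end
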